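/- Let Φ = {φ_i}_{i=1}^N and Ψ = {ψ_j}_{j=1}^M be IFSs of similitudes on ℝ^d, both satisfying the open set condition and generating the same self-similar set E. If Φ does not satisfy the strong separation condition, then γ(Ψ) ≺ γ(Φ∘Ψ), where γ denotes the characteristic vector and ≺ the order on eventually-zero sequences defined by x ≺ y iff ∃m: x_m < y_m and x_n = y_n for n > m. -/

import Mathlib

open Set Metric

noncomputable section

abbrev Pt (d : ℕ) := EuclideanSpace ℝ (Fin d)

/-- `f` is a similitude with ratio `r`. -/
def IsSimilitude {X : Type*} [MetricSpace X] (f : X → X) (r : ℝ) : Prop :=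
  ∀ x y, dist (f x) (f y) = r * dist x y

/-- `E` is the attractor of the IFS `φ`. -/
def IsAttractor {X : Type*} [MetricSpace X] {ι : Type*} (φ : ι → X → X) (E : Set X) : Prop :=
  IsCompact E ∧ E.Nonempty ∧ E = ⋃ i, φ i '' E

/-- Strong separation condition. -/
def SSC {X : Type*} [MetricSpace X] {ι : Type*} (φ : ι → X → X) (E : Set X) : Prop :=
  Pairwise fun i j => Disjoint (φ i '' E) (φ j '' E)

/-- Open set condition. -/
def OSC {X : Type*} [MetricSpace X] {ι : Type*} (φ : ι → X → X) : Prop :=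
  ∃ U : Set X, U.Nonempty ∧ IsOpen U ∧ (∀ i, φ i '' U ⊆ U) ∧
    Pairwise fun i j => Disjoint (φ i '' U) (φ j '' U)

/-- Adjacency: images of the attractor intersect. -/
def Adj {X : Type*} [MetricSpace X] {ι : Type*} (φ : ι → X → X) (E : Set X) (i j : ι) : Prop :=
  (φ i '' E ∩ φ j '' E).Nonempty

/-- `Λ` is a connected component of the index set with respect to the
equivalence generated by the adjacency relation. -/
def IsComponent {X : Type*} [MetricSpace X] {ι : Type*} (φ : ι → X → X) (E : Set X)
    (Λ : Set ι) : Prop :=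
  ∃ i, Λ = {j | Relation.ReflTransGen (Adj φ E) i j}

open Classical in
/-- The `n`-th entry of the characteristic vector of an IFS with contraction
ratios `r` and similarity dimension `s`. -/
def gammaVec {X : Type*} [MetricSpace X] {ι : Type*} [Fintype ι] (φ : ι → X → X) (E : Set X)
    (r : ι → ℝ) (s : ℝ) (n : ℕ) : ℝ :=
  ∑ Λ : Finset ι, if IsComponent φ E ↑Λ ∧ Λ.card = n then ∑ i ∈ Λ, r i ^ s else 0

/-- The strict order on eventually zero sequences. -/
def Prec (x y : ℕ → ℝ) : Prop :=
  ∃ m, x m < y m ∧ ∀ n > m, x n = y n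

def PrecLe (x y : ℕ → ℝ) : Prop := Prec x y ∨ x = y

/-! ### Auxiliary machinery -/

open Classical in
/-- The connected component of `i` under the reflexive-transitive closure of `R`,
as a `Finset`. -/
noncomputable def compF {ι : Type*} [Fintype ι] (R : ι → ι → Prop) (i : ι) : Finset ι :=
  Finset.univ.filter fun j => Relation.ReflTransGen R i j

lemma mem_compF {ι : Type*} [Fintype ι] {R : ι → ι → Prop} {i j : ι} :
    j ∈ compF R i ↔ Relation.ReflTransGen R i j := by
  classical simp [compF]

lemma coe_compF {ι : Type*} [Fintype ι] (R : ι → ι → Prop) (i : ι) :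
    (compF R i : Set ι) = {j | Relation.ReflTransGen R i j} := by
  ext j; simp [mem_compF]

lemma self_mem_compF {ι : Type*} [Fintype ι] (R : ι → ι → Prop) (i : ι) :
    i ∈ compF R i := mem_compF.2 .refl

lemma compF_eq_of_mem {ι : Type*} [Fintype ι] {R : ι → ι → Prop} (hR : Symmetric R)
    {i j : ι} (h : j ∈ compF R i) : compF R j = compF R i := by
  rw [mem_compF] at h
  ext k
  rw [mem_compF, mem_compF]
  exact ⟨fun hk => h.trans hk, fun hk => (show Relation.ReflTransGen R j i by haveI : Std.Symm R := ⟨fun _ _ h => hR h⟩; exact Std.Symm.symm _ _ h).trans hk⟩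

lemma adj_symm {X : Type*} [MetricSpace X] {ι : Type*} (φ : ι → X → X) (E : Set X) :
    Symmetric (Adj φ E) := by
  intro a b ⟨x, h1, h2⟩
  exact ⟨x, h2, h1⟩

lemma isComponent_iff {X : Type*} [MetricSpace X] {ι : Type*} [Fintype ι]
    (χ : ι → X → X) (E : Set X) (Λ : Finset ι) :
    IsComponent χ E ↑Λ ↔ ∃ i, Λ = compF (Adj χ E) i := by
  constructor
  · rintro ⟨i, h⟩
    refine ⟨i, Finset.coe_injective ?_⟩
    rw [h, coe_compF]
  · rintro ⟨i, rfl⟩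
    exact ⟨i, coe_compF _ _⟩

theorem key_lemma_characteristic_increases {d N M : ℕ} (hN : 1 < N) (hM : 1 < M)
    (φ : Fin N → Pt d → Pt d) (ψ : Fin M → Pt d → Pt d)
    (ρ : Fin N → ℝ) (r : Fin M → ℝ)
    (hρ : ∀ i, 0 < ρ i ∧ ρ i < 1) (hr : ∀ j, 0 < r j ∧ r j < 1)
    (hφ : ∀ i, IsSimilitude (φ i) (ρ i)) (hψ : ∀ j, IsSimilitude (ψ j) (r j))
    (hOSCφ : OSC φ) (hOSCψ : OSC ψ)
    (E : Set (Pt d)) (hEφ : IsAttractor φ E) (hEψ : IsAttractor ψ E)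
    (s : ℝ) (hsφ : ∑ i, ρ i ^ s = 1) (hsψ : ∑ j, r j ^ s = 1)
    (hnSSC : ¬ SSC φ E) :
    Prec (gammaVec ψ E r s)
      (gammaVec (fun p : Fin N × Fin M => φ p.1 ∘ ψ p.2) E (fun p => ρ p.1 * r p.2) s) := by
  classical
  obtain ⟨-, hEne, hErep⟩ := hEψ
  set χ : Fin N × Fin M → Pt d → Pt d := fun p => φ p.1 ∘ ψ p.2 with hχ
  -- components
  set Cψ : Fin M → Finset (Fin M) := compF (Adj ψ E) with hCψ
  set CA : Fin N × Fin M → Finset (Fin N × Fin M) := compF (Adj χ E) with hCA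
  -- pieces
  set P : Fin N × Fin M → Finset (Fin N × Fin M) := fun p => {p.1} ×ˢ Cψ p.2 with hP
  have memP : ∀ p q : Fin N × Fin M, q ∈ P p ↔ q.1 = p.1 ∧ q.2 ∈ Cψ p.2 := by
    intro p q
    show q ∈ {p.1} ×ˢ Cψ p.2 ↔ _
    rw [Finset.mem_product, Finset.mem_singleton]
  have self_memP : ∀ p, p ∈ P p := fun p => (memP p p).2 ⟨rfl, self_mem_compF _ _⟩
  have cardP : ∀ p, (P p).card = (Cψ p.2).card := by
    intro p
    simp [hP, Finset.card_product]
  -- adjacency lifts along each φ i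
  have L1 : ∀ (i : Fin N) (j j' : Fin M), Adj ψ E j j' → Adj χ E (i, j) (i, j') := by
    rintro i j j' ⟨x, ⟨a, ha, rfl⟩, ⟨b, hb, hba⟩⟩
    refine ⟨φ i (ψ j a), ⟨a, ha, rfl⟩, ⟨b, hb, ?_⟩⟩
    show φ i (ψ j' b) = φ i (ψ j a)
    rw [hba]
  have P_subset_CA : ∀ p, P p ⊆ CA p := by
    rintro p ⟨q1, q2⟩ hq
    obtain ⟨h1, h2⟩ := (memP p (q1, q2)).1 hq
    dsimp at h1 h2
    subst h1
    have hrt : Relation.ReflTransGen (Adj χ E) (p.1, p.2) (p.1, q2) :=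
      Relation.ReflTransGen.lift (fun j => (p.1, j)) (fun a b h => L1 p.1 a b h)
        _ _ (mem_compF.1 h2)
    exact mem_compF.2 hrt
  have CA_eq_of_mem : ∀ p q, q ∈ CA p → CA q = CA p :=
    fun p q h => compF_eq_of_mem (adj_symm χ E) h
  have Cψ_eq_of_mem : ∀ j j', j' ∈ Cψ j → Cψ j' = Cψ j :=
    fun j j' h => compF_eq_of_mem (adj_symm ψ E) h
  have P_eq_of_mem : ∀ p q, q ∈ P p → P q = P p := by
    intro p q hq
    obtain ⟨h1, h2⟩ := (memP p q).1 hq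
    show {q.1} ×ˢ Cψ q.2 = {p.1} ×ˢ Cψ p.2
    rw [h1, Cψ_eq_of_mem _ _ h2]
  -- merged components
  set Mrg : Finset (Fin N × Fin M) → Prop :=
    fun Γ => ∃ q ∈ Γ, ∃ q' ∈ Γ, P q ≠ P q' with hMrg
  have nonmerged_eq : ∀ p, ¬ Mrg (CA p) → CA p = P p := by
    intro p h
    apply Finset.Subset.antisymm _ (P_subset_CA p)
    intro q hq
    have hPq : P q = P p := by
      by_contra hne
      exact h ⟨q, hq, p, self_mem_compF _ _, hne⟩
    exact hPq ▸ self_memP q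
  have merged_card : ∀ p q, Mrg (CA p) → q ∈ CA p → (P q).card < (CA p).card := by
    intro p q hm hq
    obtain ⟨a, ha, b, hb, hab⟩ := hm
    have hsub : P q ⊆ CA p := by
      intro z hz
      have hz' := P_subset_CA q hz
      rwa [CA_eq_of_mem p q hq] at hz'
    apply Finset.card_lt_card
    rw [Finset.ssubset_iff_of_subset hsub]
    by_cases hqa : P a = P q
    · exact ⟨b, hb, fun hbq => hab (hqa.trans (P_eq_of_mem q b hbq).symm)⟩
    · exact ⟨a, ha, fun haq => hqa (P_eq_of_mem q a haq)⟩
  -- existence of a merged component, from failure of SSC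
  obtain ⟨i0, i0', hii, hnd⟩ : ∃ i j, i ≠ j ∧ ¬ Disjoint (φ i '' E) (φ j '' E) := by
    by_contra h
    push_neg at h
    exact hnSSC fun i j hij => h i j hij
  rw [Set.not_disjoint_iff] at hnd
  obtain ⟨x, hx1, hx2⟩ := hnd
  obtain ⟨a, ha, rfl⟩ := hx1
  obtain ⟨b, hb, hba⟩ := hx2
  have haU : a ∈ ⋃ j, ψ j '' E := hErep ▸ ha
  have hbU : b ∈ ⋃ j, ψ j '' E := hErep ▸ hb
  obtain ⟨k, c, hc, hck⟩ := Set.mem_iUnion.1 haU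
  obtain ⟨l, e, he, hel⟩ := Set.mem_iUnion.1 hbU
  have hadj : Adj χ E (i0, k) (i0', l) := by
    refine ⟨φ i0 a, ⟨c, hc, ?_⟩, ⟨e, he, ?_⟩⟩
    · show φ i0 (ψ k c) = φ i0 a
      rw [hck]
    · show φ i0' (ψ l e) = φ i0 a
      rw [hel, hba]
  have hmem0 : (i0', l) ∈ CA (i0, k) := mem_compF.2 (Relation.ReflTransGen.single hadj)
  have hPne0 : P (i0, k) ≠ P (i0', l) := by
    intro h
    have : (i0, k) ∈ P (i0', l) := h ▸ self_memP (i0, k)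
    exact hii ((memP _ _).1 this).1
  have hMrg0 : Mrg (CA (i0, k)) := ⟨(i0, k), self_mem_compF _ _, (i0', l), hmem0, hPne0⟩
  -- the maximal cardinality of merged components
  set MC : Finset (Finset (Fin N × Fin M)) :=
    Finset.univ.filter (fun Γ => (∃ p, Γ = CA p) ∧ Mrg Γ) with hMC
  have hMCne : MC.Nonempty := ⟨CA (i0, k), by
    simp only [hMC, Finset.mem_filter, Finset.mem_univ, true_and]
    exact ⟨⟨(i0, k), rfl⟩, hMrg0⟩⟩
  set m : ℕ := (MC.image Finset.card).max' (hMCne.image _) with hm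
  have M1 : ∀ p, Mrg (CA p) → (CA p).card ≤ m := by
    intro p h
    refine Finset.le_max' _ _ (Finset.mem_image_of_mem _ ?_)
    simp only [hMC, Finset.mem_filter, Finset.mem_univ, true_and]
    exact ⟨⟨p, rfl⟩, h⟩
  have M2 : ∃ p, Mrg (CA p) ∧ (CA p).card = m := by
    have hmem := (MC.image Finset.card).max'_mem (hMCne.image _)
    rw [← hm, Finset.mem_image] at hmem
    obtain ⟨Γ, hΓ, hc⟩ := hmem
    simp only [hMC, Finset.mem_filter, Finset.mem_univ, true_and] at hΓ
    obtain ⟨⟨p, rfl⟩, hmrg⟩ := hΓ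
    exact ⟨p, hmrg, hc⟩
  have hm0 : 0 < m := by
    obtain ⟨p, _, hc⟩ := M2
    rw [← hc]
    exact Finset.card_pos.2 ⟨p, self_mem_compF _ _⟩
  -- weights and the index sets of components of given cardinality
  set w1 : Finset (Fin M) → ℝ := fun Λ => ∑ j ∈ Λ, r j ^ s with hw1
  set w2 : Finset (Fin N × Fin M) → ℝ := fun Γ => ∑ p ∈ Γ, (ρ p.1 * r p.2) ^ s with hw2
  set S : ℕ → Finset (Finset (Fin M)) :=
    fun n => Finset.univ.filter (fun Λ => IsComponent ψ E ↑Λ ∧ Λ.card = n) with hS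
  set T : ℕ → Finset (Finset (Fin N × Fin M)) :=
    fun n => Finset.univ.filter (fun Γ => IsComponent χ E ↑Γ ∧ Γ.card = n) with hT
  have hγψ : ∀ n, gammaVec ψ E r s n = ∑ Λ ∈ S n, w1 Λ := by
    intro n
    rw [hS, gammaVec]
    rw [Finset.sum_filter]
  have hγχ : ∀ n, gammaVec χ E (fun p => ρ p.1 * r p.2) s n = ∑ Γ ∈ T n, w2 Γ := by
    intro n
    rw [hT, gammaVec]
    rw [Finset.sum_filter]
  have hSmem : ∀ n (Λ : Finset (Fin M)), Λ ∈ S n ↔ (∃ j, Λ = Cψ j) ∧ Λ.card = n := by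
    intro n Λ
    simp only [hS, Finset.mem_filter, Finset.mem_univ, true_and, isComponent_iff, hCψ]
  have hTmem : ∀ n (Γ : Finset (Fin N × Fin M)), Γ ∈ T n ↔ (∃ p, Γ = CA p) ∧ Γ.card = n := by
    intro n Γ
    simp only [hT, Finset.mem_filter, Finset.mem_univ, true_and, isComponent_iff, hCA]
  -- pieces of large cardinality are full components
  have piece_comp : ∀ (i : Fin N) (j : Fin M), m ≤ (Cψ j).card → CA (i, j) = P (i, j) := by
    intro i j hcard
    by_cases hmg : Mrg (CA (i, j))
    · exfalso
      have h1 := merged_card (i, j) (i, j) hmg (self_mem_compF _ _)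
      have h2 := M1 (i, j) hmg
      have h3 : (P (i, j)).card = (Cψ j).card := cardP (i, j)
      omega
    · exact nonmerged_eq _ hmg
  -- the key bijection
  have key : ∀ n, m ≤ n →
      (T n).filter (fun Γ => ¬ Mrg Γ) =
        (Finset.univ ×ˢ S n).image (fun q : Fin N × Finset (Fin M) => {q.1} ×ˢ q.2) := by
    intro n hn
    ext Γ
    simp only [Finset.mem_filter, Finset.mem_image, Finset.mem_product, Finset.mem_univ,
      true_and]
    constructor
    · rintro ⟨hTn, hnm⟩
      rw [hTmem] at hTn
      obtain ⟨⟨p, rfl⟩, hcard⟩ := hTn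
      have hPp := nonmerged_eq p hnm
      refine ⟨(p.1, Cψ p.2), ?_, ?_⟩
      · rw [hSmem]
        refine ⟨⟨p.2, rfl⟩, ?_⟩
        rw [← cardP p, ← hPp]
        exact hcard
      · rw [hPp]
    · rintro ⟨⟨i, Λ⟩, hSn, rfl⟩
      rw [hSmem] at hSn
      obtain ⟨⟨j, rfl⟩, hcard⟩ := hSn
      have hfull : CA (i, j) = P (i, j) := piece_comp i j (hcard ▸ hn)
      have hΓP : ({i} ×ˢ Cψ j : Finset (Fin N × Fin M)) = P (i, j) := rfl
      constructor
      · rw [hTmem]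
        refine ⟨⟨(i, j), by rw [hfull, hΓP]⟩, ?_⟩
        rw [hΓP, cardP, hcard]
      · rintro ⟨q, hq, q', hq', hab⟩
        rw [hΓP] at hq hq'
        exact hab ((P_eq_of_mem _ _ hq).trans (P_eq_of_mem _ _ hq').symm)
  -- sum over unmerged components of card n equals `gammaVec ψ` at n
  have sum_nonmerged : ∀ n, m ≤ n →
      ∑ Γ ∈ (T n).filter (fun Γ => ¬ Mrg Γ), w2 Γ = gammaVec ψ E r s n := by
    intro n hn
    have hinj : ∀ a ∈ Finset.univ ×ˢ S n, ∀ b ∈ Finset.univ ×ˢ S n,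
        (fun q : Fin N × Finset (Fin M) => ({q.1} ×ˢ q.2 : Finset (Fin N × Fin M))) a =
          (fun q : Fin N × Finset (Fin M) => ({q.1} ×ˢ q.2 : Finset (Fin N × Fin M))) b →
        a = b := by
      rintro ⟨i, Λ⟩ hiΛ ⟨i', Λ'⟩ hiΛ' heq
      rw [Finset.mem_product] at hiΛ hiΛ'
      obtain ⟨⟨j, rfl⟩, -⟩ := (hSmem n Λ).1 hiΛ.2
      obtain ⟨⟨j', rfl⟩, -⟩ := (hSmem n Λ').1 hiΛ'.2
      dsimp at heq
      have hj : (i, j) ∈ ({i} ×ˢ Cψ j : Finset (Fin N × Fin M)) :=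
        Finset.mem_product.2 ⟨Finset.mem_singleton_self i, self_mem_compF _ _⟩
      rw [heq] at hj
      rw [Finset.mem_product, Finset.mem_singleton] at hj
      have hieq : i = i' := hj.1
      subst hieq
      have hΛeq : Cψ j = Cψ j' := by
        ext k
        have h1 : (i, k) ∈ ({i} ×ˢ Cψ j : Finset (Fin N × Fin M)) ↔
            (i, k) ∈ ({i} ×ˢ Cψ j' : Finset (Fin N × Fin M)) := by rw [heq]
        rw [Finset.mem_product, Finset.mem_product, Finset.mem_singleton] at h1
        simpa using h1
      rw [hΛeq]
    rw [key n hn, Finset.sum_image hinj]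
    have hpw : ∀ (q : Fin N × Finset (Fin M)),
        w2 ({q.1} ×ˢ q.2) = ρ q.1 ^ s * w1 q.2 := by
      rintro ⟨i, Λ⟩
      rw [hw2, hw1]
      dsimp
      rw [Finset.sum_product, Finset.sum_singleton, Finset.mul_sum]
      refine Finset.sum_congr rfl fun j _ => ?_
      rw [Real.mul_rpow (hρ i).1.le (hr j).1.le]
    rw [hγψ n]
    calc ∑ q ∈ Finset.univ ×ˢ S n, w2 ({q.1} ×ˢ q.2)
        = ∑ q ∈ Finset.univ ×ˢ S n, ρ q.1 ^ s * w1 q.2 := by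
          exact Finset.sum_congr rfl fun q _ => hpw q
      _ = ∑ i : Fin N, ∑ Λ ∈ S n, ρ i ^ s * w1 Λ := by rw [Finset.sum_product]
      _ = ∑ i : Fin N, ρ i ^ s * ∑ Λ ∈ S n, w1 Λ := by
          refine Finset.sum_congr rfl fun i _ => ?_
          rw [Finset.mul_sum]
      _ = (∑ i : Fin N, ρ i ^ s) * ∑ Λ ∈ S n, w1 Λ := (Finset.sum_mul _ _ _).symm
      _ = ∑ Λ ∈ S n, w1 Λ := by rw [hsφ, one_mul]
  -- no merged components above card m
  have merged_empty : ∀ n, m < n → (T n).filter Mrg = ∅ := by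
    intro n hn
    rw [Finset.filter_eq_empty_iff]
    intro Γ hTn
    rw [hTmem] at hTn
    obtain ⟨⟨p, rfl⟩, hcard⟩ := hTn
    intro hmg
    have := M1 p hmg
    omega
  -- conclusion
  refine ⟨m, ?_, ?_⟩
  · rw [hγχ, ← Finset.sum_filter_add_sum_filter_not (T m) Mrg w2,
      sum_nonmerged m le_rfl]
    have hpos : 0 < ∑ Γ ∈ (T m).filter Mrg, w2 Γ := by
      obtain ⟨p, hmg, hc⟩ := M2
      have hmemT : CA p ∈ (T m).filter Mrg := by
        rw [Finset.mem_filter, hTmem]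
        exact ⟨⟨⟨p, rfl⟩, hc⟩, hmg⟩
      have hwpos : 0 < w2 (CA p) := by
        rw [hw2]
        exact Finset.sum_pos
          (fun q _ => Real.rpow_pos_of_pos (mul_pos (hρ q.1).1 (hr q.2).1) s)
          ⟨p, self_mem_compF _ _⟩
      refine lt_of_lt_of_le hwpos (Finset.single_le_sum (fun Γ _ => ?_) hmemT)
      rw [hw2]
      exact Finset.sum_nonneg fun q _ =>
        (Real.rpow_pos_of_pos (mul_pos (hρ q.1).1 (hr q.2).1) s).le
    linarith
  · intro n hn
    rw [hγχ, ← Finset.sum_filter_add_sum_filter_not (T n) Mrg w2,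
      merged_empty n hn, Finset.sum_empty, zero_add, sum_nonmerged n hn.le]
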